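/- Let P = (p_ij) be a 3×3 matrix of natural numbers all of whose row sums equal d ≥ 1, and whose determinant Δ (computed as an integer) is nonzero. Consider the subgroup H of (ℂˣ)³ consisting of all triples (λ₁, λ₂, λ₃) of nonzero complex numbers such that λ₁^{p₁₁}λ₂^{p₁₂}λ₃^{p₁₃} = λ₁^{p₂₁}λ₂^{p₂₂}λ₃^{p₂₃} = λ₁^{p₃₁}λ₂^{p₃₂}λ₃^{p₃₃}, and its subgroup S = {(λ, λ, λ) : λ ∈ ℂˣ} of scalar triples. Then the quotient group H/S is finite of order |Δ|/d. (In particular, when |Δ| > d the corresponding three-term curve has a non-trivial group of diagonal projective automorphisms.) -/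

import Mathlib

/-- Existence of `g`-th roots in `ℂˣ` for `g ≠ 0`. -/
private lemma units_exists_zpow_eq {g : ℤ} (hg : g ≠ 0) (w : ℂˣ) : ∃ ν : ℂˣ, ν ^ g = w := by
  have key : ∀ u : ℂˣ, ∃ ν : ℂˣ, ν ^ (g.natAbs : ℤ) = u := by
    intro u
    obtain ⟨z, hz⟩ := IsAlgClosed.exists_pow_nat_eq (u : ℂ) (Int.natAbs_pos.mpr hg)
    have hz0 : z ≠ 0 := by
      rintro rfl
      rw [zero_pow (Int.natAbs_ne_zero.mpr hg)] at hz
      exact u.ne_zero hz.symm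
    refine ⟨Units.mk0 z hz0, ?_⟩
    rw [zpow_natCast]
    ext
    push_cast
    exact hz
  rcases Int.natAbs_eq g with h | h
  · obtain ⟨ν, hν⟩ := key w
    exact ⟨ν, by rw [h]; exact hν⟩
  · obtain ⟨ν, hν⟩ := key w⁻¹
    exact ⟨ν, by rw [h, zpow_neg, hν, inv_inv]⟩

/-- The number of solutions of `μ ^ m = 1` in `ℂˣ` is `|m|` for `m ≠ 0`. -/
private lemma card_units_zpow_eq_one {m : ℤ} (hm : m ≠ 0) :
    Nat.card {μ : ℂˣ // μ ^ m = 1} = m.natAbs := by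
  have hiff : ∀ μ : ℂˣ, μ ^ m = 1 ↔ μ ∈ rootsOfUnity m.natAbs ℂ := by
    intro μ
    rw [mem_rootsOfUnity]
    rcases Int.natAbs_eq m with h | h
    · nth_rewrite 1 [h]; rw [zpow_natCast]
    · nth_rewrite 1 [h]; rw [zpow_neg, zpow_natCast, inv_eq_one]
  haveI : NeZero m.natAbs := ⟨Int.natAbs_ne_zero.mpr hm⟩
  rw [Nat.card_congr (Equiv.subtypeEquivRight hiff)]
  exact (Complex.isPrimitiveRoot_exp m.natAbs (Int.natAbs_ne_zero.mpr hm)).card_rootsOfUnity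

/-- The subgroup of `(ℂˣ)²` defined by two monomial equations with integer exponents. -/
private def Ksub (a b c e : ℤ) : Subgroup (ℂˣ × ℂˣ) where
  carrier := {x | x.1 ^ a * x.2 ^ b = 1 ∧ x.1 ^ c * x.2 ^ e = 1}
  one_mem' := by simp
  mul_mem' := by
    rintro x y ⟨hx1, hx2⟩ ⟨hy1, hy2⟩
    refine ⟨?_, ?_⟩ <;> simp only [Prod.fst_mul, Prod.snd_mul, mul_zpow]
    · rw [mul_mul_mul_comm, hx1, hy1, one_mul]
    · rw [mul_mul_mul_comm, hx2, hy2, one_mul]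
  inv_mem' := by
    rintro x ⟨hx1, hx2⟩
    refine ⟨?_, ?_⟩ <;> simp only [Prod.fst_inv, Prod.snd_inv, inv_zpow]
    · rw [← mul_inv, hx1, inv_one]
    · rw [← mul_inv, hx2, inv_one]

private lemma mem_Ksub {a b c e : ℤ} {x : ℂˣ × ℂˣ} :
    x ∈ Ksub a b c e ↔ x.1 ^ a * x.2 ^ b = 1 ∧ x.1 ^ c * x.2 ^ e = 1 := Iff.rfl

private lemma comb {x y : ℂˣ} {a b c e : ℤ} (h1 : x ^ a * y ^ b = 1)
    (h2 : x ^ c * y ^ e = 1) (s t : ℤ) :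
    x ^ (s * a + t * c) * y ^ (s * b + t * e) = 1 := by
  rw [mul_comm s a, mul_comm t c, mul_comm s b, mul_comm t e, zpow_add, zpow_add,
      zpow_mul, zpow_mul, zpow_mul, zpow_mul, mul_mul_mul_comm, ← mul_zpow, ← mul_zpow,
      h1, h2, one_zpow, one_zpow, one_mul]

/-- Counting the triangular case. -/
private lemma Ksub_card_tri {a g c : ℤ} (hg : g ≠ 0) (hc : c ≠ 0) :
    Nat.card (Ksub a g c 0) = g.natAbs * c.natAbs := by
  let q : Ksub a g c 0 →* ℂˣ := (MonoidHom.fst ℂˣ ℂˣ).comp (Ksub a g c 0).subtype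
  have hq : ∀ x : Ksub a g c 0, q x = (x : ℂˣ × ℂˣ).1 := fun _ => rfl
  have hkercard : Nat.card q.ker = g.natAbs := by
    rw [← card_units_zpow_eq_one hg]
    refine Nat.card_congr ⟨fun x => ⟨(x : Ksub a g c 0).1.2, ?_⟩,
      fun ν => ⟨⟨⟨1, ν.1⟩, ?_, ?_⟩, ?_⟩, fun x => ?_, fun ν => ?_⟩
    · have h1 := ((x : Ksub a g c 0).2 : _ ∈ Ksub a g c 0).1
      have h0 : ((x : Ksub a g c 0) : ℂˣ × ℂˣ).1 = 1 := MonoidHom.mem_ker.mp x.2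
      rwa [h0, one_zpow, one_mul] at h1
    · show (1 : ℂˣ) ^ a * ν.1 ^ g = 1
      rw [one_zpow, one_mul, ν.2]
    · show (1 : ℂˣ) ^ c * ν.1 ^ (0 : ℤ) = 1
      rw [one_zpow, one_mul, zpow_zero]
    · exact MonoidHom.mem_ker.mpr rfl
    · refine Subtype.ext (Subtype.ext (Prod.ext ?_ rfl))
      exact (MonoidHom.mem_ker.mp x.2).symm
    · exact Subtype.ext rfl
  have hrangecard : Nat.card q.range = c.natAbs := by
    rw [← card_units_zpow_eq_one hc]
    refine Nat.card_congr (Equiv.subtypeEquivRight fun μ => ?_)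
    constructor
    · rintro ⟨y, rfl⟩
      have h2 := (y.2 : _ ∈ Ksub a g c 0).2
      rwa [zpow_zero, mul_one] at h2
    · intro hμ
      obtain ⟨ν, hν⟩ := units_exists_zpow_eq hg (μ ^ (-a))
      refine ⟨⟨(μ, ν), ?_, ?_⟩, rfl⟩
      · show μ ^ a * ν ^ g = 1
        rw [hν, ← zpow_add, add_neg_cancel, zpow_zero]
      · show μ ^ c * ν ^ (0 : ℤ) = 1
        rw [zpow_zero, mul_one, hμ]
  calc Nat.card (Ksub a g c 0)
      = Nat.card (Ksub a g c 0 ⧸ q.ker) * Nat.card q.ker :=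
        Subgroup.card_eq_card_quotient_mul_card_subgroup q.ker
    _ = Nat.card q.range * Nat.card q.ker := by
        rw [Nat.card_congr (QuotientGroup.quotientKerEquivRange q).toEquiv]
    _ = c.natAbs * g.natAbs := by rw [hkercard, hrangecard]
    _ = g.natAbs * c.natAbs := Nat.mul_comm _ _

/-- Counting the general case via row reduction. -/
private lemma Ksub_card {a b c e : ℤ} (h : a * e - b * c ≠ 0) :
    Nat.card (Ksub a b c e) = (a * e - b * c).natAbs := by
  set g : ℤ := (Int.gcd b e : ℤ) with hgdef
  have hg : g ≠ 0 := by
    rw [hgdef]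
    intro h0
    have hbe := Int.gcd_eq_zero_iff.mp (by exact_mod_cast h0)
    rw [hbe.1, hbe.2] at h
    simp at h
  obtain ⟨b₁, hb⟩ : g ∣ b := Int.gcd_dvd_left b e
  obtain ⟨e₁, he⟩ : g ∣ e := Int.gcd_dvd_right b e
  set s : ℤ := Int.gcdA b e with hsdef
  set t : ℤ := Int.gcdB b e with htdef
  have hbez : g = b * s + e * t := Int.gcd_eq_gcd_ab b e
  have hst : b₁ * s + e₁ * t = 1 := by
    apply mul_left_cancel₀ hg
    rw [mul_one]
    calc g * (b₁ * s + e₁ * t) = (g * b₁) * s + (g * e₁) * t := by ring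
      _ = b * s + e * t := by rw [← hb, ← he]
      _ = g := hbez.symm
  have hgc : s * b + t * e = g := by rw [hbez]; ring
  have hzero : -e₁ * b + b₁ * e = 0 := by rw [hb, he]; ring
  have hdet' : a * e - b * c = -(g * (-e₁ * a + b₁ * c)) := by rw [hb, he]; ring
  have hc' : (-e₁ * a + b₁ * c) ≠ 0 := by
    intro h0
    rw [hdet', h0, mul_zero, neg_zero] at h
    exact h rfl
  have hmemiff : ∀ x : ℂˣ × ℂˣ,
      x ∈ Ksub a b c e ↔ x ∈ Ksub (s * a + t * c) g (-e₁ * a + b₁ * c) 0 := by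
    intro x
    constructor
    · rintro ⟨h1, h2⟩
      constructor
      · have hcomb := comb h1 h2 s t
        rwa [hgc] at hcomb
      · have hcomb := comb h1 h2 (-e₁) b₁
        rwa [hzero] at hcomb
    · rintro ⟨h1, h2⟩
      constructor
      · have k1 := comb h1 h2 b₁ (-t)
        have e1 : b₁ * (s * a + t * c) + -t * (-e₁ * a + b₁ * c) = a := by
          linear_combination a * hst
        have e2 : b₁ * g + -t * 0 = b := by rw [hb]; ring
        rwa [e1, e2] at k1
      · have k2 := comb h1 h2 e₁ s
        have e3 : e₁ * (s * a + t * c) + s * (-e₁ * a + b₁ * c) = c := by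
          linear_combination c * hst
        have e4 : e₁ * g + s * 0 = e := by rw [he]; ring
        rwa [e3, e4] at k2
  rw [Nat.card_congr (Equiv.subtypeEquivRight hmemiff), Ksub_card_tri hg hc', hdet',
      Int.natAbs_neg, Int.natAbs_mul]

/-- For a 3×3 power matrix `p` with all row sums `d ≥ 1` and nonzero
integer determinant `Δ`, the group `H` of diagonal triples `(λ₁,λ₂,λ₃) ∈ (ℂˣ)³`
multiplying all three monomials by a common factor, modulo the subgroup `S` of scalar
triples, is finite of order `|Δ|/d`. -/
theorem diagonal_automorphism_group_order
    (d : ℕ) (hd : 1 ≤ d)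
    (p : Fin 3 → Fin 3 → ℕ)
    (hrow : ∀ i, p i 0 + p i 1 + p i 2 = d)
    (hdet : (Matrix.of fun i j : Fin 3 => (p i j : ℤ)).det ≠ 0)
    (H : Subgroup (Fin 3 → ℂˣ))
    (hH : ∀ lam : Fin 3 → ℂˣ, lam ∈ H ↔
      (lam 0 ^ p 0 0 * lam 1 ^ p 0 1 * lam 2 ^ p 0 2
          = lam 0 ^ p 1 0 * lam 1 ^ p 1 1 * lam 2 ^ p 1 2 ∧
        lam 0 ^ p 1 0 * lam 1 ^ p 1 1 * lam 2 ^ p 1 2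
          = lam 0 ^ p 2 0 * lam 1 ^ p 2 1 * lam 2 ^ p 2 2))
    (S : Subgroup (Fin 3 → ℂˣ))
    (hS : ∀ lam : Fin 3 → ℂˣ, lam ∈ S ↔ ∃ l : ℂˣ, lam = fun _ => l) :
    Nat.card (H ⧸ S.subgroupOf H)
      = (Matrix.of fun i j : Fin 3 => (p i j : ℤ)).det.natAbs / d := by
  classical
  have hdnat : (0 : ℕ) < d := hd
  have hr : ∀ i : Fin 3, (p i 0 : ℤ) = (d : ℤ) - p i 1 - p i 2 := by
    intro i
    have h0 := hrow i
    have h1 : ((p i 0 : ℤ) + p i 1 + p i 2 : ℤ) = (d : ℤ) := by exact_mod_cast congrArg (Nat.cast : ℕ → ℤ) h0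
    linarith
  have hdetkey : (Matrix.of fun i j : Fin 3 => (p i j : ℤ)).det
      = (d : ℤ) * (((p 0 1 : ℤ) - p 1 1) * ((p 1 2 : ℤ) - p 2 2)
          - ((p 0 2 : ℤ) - p 1 2) * ((p 1 1 : ℤ) - p 2 1)) := by
    rw [Matrix.det_fin_three]
    simp only [Matrix.of_apply]
    rw [hr 0, hr 1, hr 2]
    ring
  set A : ℤ := (p 0 1 : ℤ) - p 1 1 with hA
  set B : ℤ := (p 0 2 : ℤ) - p 1 2 with hB
  set C : ℤ := (p 1 1 : ℤ) - p 2 1 with hC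
  set E : ℤ := (p 1 2 : ℤ) - p 2 2 with hE
  have hABCE : A * E - B * C ≠ 0 := by
    intro h0
    apply hdet
    rw [hdetkey, h0, mul_zero]
  have hRHS : (Matrix.of fun i j : Fin 3 => (p i j : ℤ)).det.natAbs / d
      = (A * E - B * C).natAbs := by
    rw [hdetkey, Int.natAbs_mul, Int.natAbs_natCast]
    exact Nat.mul_div_cancel_left _ hdnat
  -- the comparison homomorphism
  let ev : Fin 3 → ((Fin 3 → ℂˣ) →* ℂˣ) := fun i => Pi.evalMonoidHom (fun _ => ℂˣ) i
  let φ : (Fin 3 → ℂˣ) →* ℂˣ × ℂˣ := (ev 1 * (ev 0)⁻¹).prod (ev 2 * (ev 0)⁻¹)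
  have hφ : ∀ lam : Fin 3 → ℂˣ, φ lam = (lam 1 * (lam 0)⁻¹, lam 2 * (lam 0)⁻¹) := fun _ => rfl
  let ψ : H →* ℂˣ × ℂˣ := φ.comp H.subtype
  have hψ : ∀ x : H, ψ x = ((x : Fin 3 → ℂˣ) 1 * ((x : Fin 3 → ℂˣ) 0)⁻¹,
      (x : Fin 3 → ℂˣ) 2 * ((x : Fin 3 → ℂˣ) 0)⁻¹) := fun _ => rfl
  -- key monomial computation
  have hmon : ∀ (lam : Fin 3 → ℂˣ) (i j : Fin 3),
      (lam 0 ^ p i 0 * lam 1 ^ p i 1 * lam 2 ^ p i 2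
        = lam 0 ^ p j 0 * lam 1 ^ p j 1 * lam 2 ^ p j 2)
      ↔ (lam 1 * (lam 0)⁻¹) ^ ((p i 1 : ℤ) - (p j 1 : ℤ))
          * (lam 2 * (lam 0)⁻¹) ^ ((p i 2 : ℤ) - (p j 2 : ℤ)) = 1 := by
    intro lam i j
    have expand : ∀ k : Fin 3, lam 0 ^ p k 0 * lam 1 ^ p k 1 * lam 2 ^ p k 2
        = lam 0 ^ d * ((lam 1 * (lam 0)⁻¹) ^ p k 1 * (lam 2 * (lam 0)⁻¹) ^ p k 2) := by
      intro k
      rw [← hrow k, pow_add, pow_add, mul_pow, mul_pow, inv_pow, inv_pow]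
      rw [Units.ext_iff]
      push_cast
      have h1 : ((lam 0 : ℂ)) ≠ 0 := Units.ne_zero _
      field_simp
    rw [expand i, expand j, mul_right_inj, zpow_sub, zpow_sub, zpow_natCast, zpow_natCast,
        zpow_natCast, zpow_natCast, mul_mul_mul_comm, ← mul_inv, mul_inv_eq_one]
  -- kernel is S
  have hSH : S.subgroupOf H = ψ.ker := by
    ext x
    rw [Subgroup.mem_subgroupOf, MonoidHom.mem_ker, hψ, hS]
    constructor
    · rintro ⟨l, hl⟩
      rw [hl]
      simp
    · intro hx
      have h1 : (x : Fin 3 → ℂˣ) 1 * ((x : Fin 3 → ℂˣ) 0)⁻¹ = 1 := congrArg Prod.fst hx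
      have h2 : (x : Fin 3 → ℂˣ) 2 * ((x : Fin 3 → ℂˣ) 0)⁻¹ = 1 := congrArg Prod.snd hx
      refine ⟨(x : Fin 3 → ℂˣ) 0, funext fun i => ?_⟩
      fin_cases i
      · rfl
      · exact mul_inv_eq_one.mp h1
      · exact mul_inv_eq_one.mp h2
  -- range is Ksub A B C E
  have hrange : ψ.range = Ksub A B C E := by
    ext z
    rw [MonoidHom.mem_range, mem_Ksub]
    constructor
    · rintro ⟨⟨lam, hlam⟩, rfl⟩
      obtain ⟨h1, h2⟩ := (hH lam).mp hlam
      exact ⟨(hmon lam 0 1).mp h1, (hmon lam 1 2).mp h2⟩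
    · rintro ⟨hz1, hz2⟩
      have hmem : (![1, z.1, z.2] : Fin 3 → ℂˣ) ∈ H := by
        rw [hH]
        have e0 : (![1, z.1, z.2] : Fin 3 → ℂˣ) 0 = 1 := rfl
        have e1 : (![1, z.1, z.2] : Fin 3 → ℂˣ) 1 = z.1 := rfl
        have e2 : (![1, z.1, z.2] : Fin 3 → ℂˣ) 2 = z.2 := rfl
        constructor
        · refine (hmon _ 0 1).mpr ?_
          rw [e0, e1, e2, inv_one, mul_one, mul_one]
          exact hz1
        · refine (hmon _ 1 2).mpr ?_
          rw [e0, e1, e2, inv_one, mul_one, mul_one]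
          exact hz2
      refine ⟨⟨_, hmem⟩, ?_⟩
      rw [hψ]
      simp only []
      have e0 : (![1, z.1, z.2] : Fin 3 → ℂˣ) 0 = 1 := rfl
      have e1 : (![1, z.1, z.2] : Fin 3 → ℂˣ) 1 = z.1 := rfl
      have e2 : (![1, z.1, z.2] : Fin 3 → ℂˣ) 2 = z.2 := rfl
      rw [e0, e1, e2, inv_one, mul_one, mul_one]
  calc Nat.card (H ⧸ S.subgroupOf H)
      = Nat.card (H ⧸ ψ.ker) := by rw [hSH]
    _ = Nat.card ψ.range := Nat.card_congr (QuotientGroup.quotientKerEquivRange ψ).toEquiv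
    _ = Nat.card (Ksub A B C E) := by rw [hrange]
    _ = (A * E - B * C).natAbs := Ksub_card hABCE
    _ = (Matrix.of fun i j : Fin 3 => (p i j : ℤ)).det.natAbs / d := hRHS.symm
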